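/- Maximum principle for the partially degenerate operator L̂: Let ψ = (ψ₁,…,ψₙ) be a vector-valued function such that every ψ_i is continuous on Ω̄ with ∂ψ_i/∂t continuous on Ω, and ψₙ additionally has ∂ψₙ/∂x continuous on Ω̄ and ∂²ψₙ/∂x² continuous on Ω. If (b₀ψₙ)(0,t) ≥ 0 and (b₁ψₙ)(1,t) ≥ 0 for all t ∈ [0,T], ψ_i(x,0) ≥ 0 for all i and x ∈ [0,1], and (L̂ψ)_i(x,t) ≥ 0 for all i and all (x,t) ∈ Ω, then ψ_i(x,t) ≥ 0 for all i and all (x,t) ∈ Ω̄. -/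

import Mathlib

open Set Filter Topology

/-- One-sided derivative sign: min attained at a point with room to the right. -/
lemma aux_deriv_nonneg (f : ℝ → ℝ) (f' lo hi x : ℝ) (hlox : lo ≤ x) (hxhi : x < hi)
    (hd : HasDerivWithinAt f f' (Set.Icc lo hi) x)
    (hmin : ∀ y ∈ Set.Icc lo hi, f x ≤ f y) : 0 ≤ f' := by
  rw [hasDerivWithinAt_iff_tendsto_slope] at hd
  have hsub : Set.Ioc x hi ⊆ Set.Icc lo hi \ {x} := by
    intro y hy
    exact ⟨⟨hlox.trans hy.1.le, hy.2⟩, fun h => absurd (h ▸ hy.1) (lt_irrefl _)⟩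
  have hne : (𝓝[Set.Ioc x hi] x).NeBot := by
    refine mem_closure_iff_nhdsWithin_neBot.mp ?_
    rw [closure_Ioc hxhi.ne]
    exact ⟨le_refl _, hxhi.le⟩
  have ht : Tendsto (slope f x) (𝓝[Set.Ioc x hi] x) (𝓝 f') :=
    hd.mono_left (nhdsWithin_mono _ hsub)
  refine ge_of_tendsto ht ?_
  filter_upwards [eventually_mem_nhdsWithin] with y hy
  rw [slope_def_field]
  exact div_nonneg (sub_nonneg.2 (hmin y ⟨hlox.trans hy.1.le, hy.2⟩)) (sub_nonneg.2 hy.1.le)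

/-- One-sided derivative sign: min attained at a point with room to the left. -/
lemma aux_deriv_nonpos (f : ℝ → ℝ) (f' lo hi x : ℝ) (hlox : lo < x) (hxhi : x ≤ hi)
    (hd : HasDerivWithinAt f f' (Set.Icc lo hi) x)
    (hmin : ∀ y ∈ Set.Icc lo hi, f x ≤ f y) : f' ≤ 0 := by
  rw [hasDerivWithinAt_iff_tendsto_slope] at hd
  have hsub : Set.Ico lo x ⊆ Set.Icc lo hi \ {x} := by
    intro y hy
    exact ⟨⟨hy.1, hy.2.le.trans hxhi⟩, fun h => absurd (h ▸ hy.2) (lt_irrefl _)⟩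
  have hne : (𝓝[Set.Ico lo x] x).NeBot := by
    refine mem_closure_iff_nhdsWithin_neBot.mp ?_
    rw [closure_Ico hlox.ne]
    exact ⟨hlox.le, le_refl _⟩
  have ht : Tendsto (slope f x) (𝓝[Set.Ico lo x] x) (𝓝 f') :=
    hd.mono_left (nhdsWithin_mono _ hsub)
  refine le_of_tendsto ht ?_
  filter_upwards [eventually_mem_nhdsWithin] with y hy
  rw [slope_def_field]
  exact div_nonpos_of_nonneg_of_nonpos
    (sub_nonneg.2 (hmin y ⟨hy.1, hy.2.le.trans hxhi⟩)) (by linarith [hy.2])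

/-- Exponential lower bound: if `u' + A u ≥ 0` on the interior and `u 0 ≥ c ≥ 0`,
then `u t ≥ c * exp (-(A*T))` on `[0,T]`. -/
lemma aux_exp_bound (T A c : ℝ) (hT : 0 < T) (hA : 0 ≤ A) (hc : 0 ≤ c)
    (u u' : ℝ → ℝ)
    (hu_cont : ContinuousOn u (Set.Icc 0 T))
    (hu' : ∀ t ∈ Set.Ioo (0:ℝ) T, HasDerivAt u (u' t) t)
    (hineq : ∀ t ∈ Set.Ioo (0:ℝ) T, 0 ≤ u' t + A * u t)
    (hu0 : c ≤ u 0) :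
    ∀ t ∈ Set.Icc (0:ℝ) T, c * Real.exp (-(A * T)) ≤ u t := by
  set v : ℝ → ℝ := fun t => u t * Real.exp (A * t) with hv
  have hvd : ∀ t ∈ Set.Ioo (0:ℝ) T,
      HasDerivAt v ((u' t + A * u t) * Real.exp (A * t)) t := by
    intro t ht
    have h1 : HasDerivAt (fun s : ℝ => A * s) A t := by
      simpa using (hasDerivAt_id t).const_mul A
    have h2 := (hu' t ht).mul h1.exp
    exact h2.congr_deriv (by ring)
  have hvc : ContinuousOn v (Set.Icc 0 T) :=
    hu_cont.mul ((Real.continuous_exp.comp (continuous_const.mul continuous_id)).continuousOn)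
  have hmono : MonotoneOn v (Set.Icc 0 T) := by
    apply monotoneOn_of_deriv_nonneg (convex_Icc 0 T) hvc
    · intro t ht
      rw [interior_Icc] at ht
      exact (hvd t ht).differentiableAt.differentiableWithinAt
    · intro t ht
      rw [interior_Icc] at ht
      rw [(hvd t ht).deriv]
      exact mul_nonneg (hineq t ht) (Real.exp_pos _).le
  intro t ht
  have h0 : v 0 ≤ v t := hmono ⟨le_refl _, hT.le⟩ ht ht.1
  have hv0 : v 0 = u 0 := by simp [hv]
  have h1 : c ≤ u t * Real.exp (A * t) := by
    simp only [hv, mul_zero, Real.exp_zero, mul_one] at h0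
    linarith
  have h2 : c * Real.exp (-(A * t)) ≤ u t := by
    have := mul_le_mul_of_nonneg_right h1 (Real.exp_pos (-(A * t))).le
    rwa [mul_assoc, ← Real.exp_add, add_neg_cancel, Real.exp_zero, mul_one] at this
  refine le_trans ?_ h2
  apply mul_le_mul_of_nonneg_left _ hc
  exact Real.exp_le_exp.2 (by nlinarith [ht.2])

/-- Second derivative is nonnegative at an interior minimum. -/
lemma aux_second_deriv (f f' : ℝ → ℝ) (f'' x : ℝ) (hx : x ∈ Set.Ioo (0:ℝ) 1)
    (hf_cont : ContinuousOn f (Set.Icc 0 1))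
    (hd1 : ∀ y ∈ Set.Icc (0:ℝ) 1, HasDerivWithinAt f (f' y) (Set.Icc 0 1) y)
    (hd2 : HasDerivWithinAt f' f'' (Set.Ioo 0 1) x)
    (hmin : ∀ y ∈ Set.Icc (0:ℝ) 1, f x ≤ f y) : 0 ≤ f'' := by
  have hx01 : x ∈ Set.Icc (0:ℝ) 1 := ⟨hx.1.le, hx.2.le⟩
  have hf'x : f' x = 0 := by
    have h1 := aux_deriv_nonneg f (f' x) 0 1 x hx.1.le hx.2 (hd1 x hx01) hmin
    have h2 := aux_deriv_nonpos f (f' x) 0 1 x hx.1 hx.2.le (hd1 x hx01) hmin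
    linarith
  by_contra hneg
  push_neg at hneg
  rw [hasDerivWithinAt_iff_tendsto_slope] at hd2
  have hsub : Set.Ioo x 1 ⊆ Set.Ioo (0:ℝ) 1 \ {x} := by
    intro y hy
    exact ⟨⟨hx.1.trans hy.1, hy.2⟩, fun h => absurd (h ▸ hy.1) (lt_irrefl _)⟩
  have ht : Tendsto (slope f' x) (𝓝[Set.Ioo x 1] x) (𝓝 f'') :=
    hd2.mono_left (nhdsWithin_mono _ hsub)
  have hev : ∀ᶠ y in 𝓝[Set.Ioo x 1] x, slope f' x y < 0 :=
    ht (Iio_mem_nhds hneg)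
  rw [eventually_nhdsWithin_iff, Metric.eventually_nhds_iff] at hev
  obtain ⟨δ, hδ, hδp⟩ := hev
  -- pick y ∈ (x, min (x+δ) 1)
  set y0 : ℝ := min (x + δ) 1 with hy0
  have hxy0 : x < y0 := lt_min (by linarith) hx.2
  set y : ℝ := (x + y0) / 2 with hy
  have hxy : x < y := by rw [hy]; linarith
  have hyy0 : y < y0 := by rw [hy]; linarith
  have hy1 : y < 1 := hyy0.trans_le (min_le_right _ _)
  have hyδ : y < x + δ := hyy0.trans_le (min_le_left _ _)
  -- MVT on [x, y]
  obtain ⟨c, hc, hcval⟩ := exists_hasDerivAt_eq_slope f f' hxy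
    (hf_cont.mono (Set.Icc_subset_Icc hx.1.le hy1.le))
    (fun z hz => (hd1 z ⟨(hx.1.trans hz.1).le, (hz.2.trans hy1).le⟩).hasDerivAt
      (Icc_mem_nhds (hx.1.trans hz.1) (hz.2.trans hy1)))
  have hc01 : c ∈ Set.Ioo x 1 := ⟨hc.1, hc.2.trans hy1⟩
  have hcnn : 0 ≤ f' c := by
    rw [hcval]
    exact div_nonneg (sub_nonneg.2 (hmin y ⟨(hx.1.trans hxy).le, hy1.le⟩)) (by linarith)
  have hcd : dist c x < δ := by
    rw [Real.dist_eq, abs_of_pos (by linarith [hc.1] : (0:ℝ) < c - x)]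
    linarith [hc.2]
  have := hδp hcd hc01
  rw [slope_def_field, hf'x, sub_zero] at this
  have hcx : 0 < c - x := by linarith [hc.1]
  rcases div_neg_iff.mp this with ⟨_, h⟩ | ⟨h, _⟩
  · linarith
  · linarith



/- STATEMENT 6: Maximum principle for the partially degenerate operator L̂.
The system has `n + 1` components indexed by `Fin (n + 1)`; the last
component carries the diffusion term with parameter `εn`.  `ψx`, `ψxx`
denote the space derivatives of the last component only. -/
theorem stmt_6
    (n : ℕ) (T : ℝ) (hT : 0 < T)
    (εn : ℝ) (hεn0 : 0 < εn) (hεn1 : εn < 1)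
    (a : Fin (n + 1) → Fin (n + 1) → ℝ → ℝ → ℝ)
    (ha_cont : ∀ i j, ContinuousOn (fun p : ℝ × ℝ => a i j p.1 p.2)
      (Set.Icc 0 1 ×ˢ Set.Icc 0 T))
    (ha_diag : ∀ i, ∀ x ∈ Set.Icc (0:ℝ) 1, ∀ t ∈ Set.Icc (0:ℝ) T,
      ∑ j ∈ Finset.univ.erase i, |a i j x t| < a i i x t)
    (ha_off : ∀ i j, i ≠ j → ∀ x ∈ Set.Icc (0:ℝ) 1, ∀ t ∈ Set.Icc (0:ℝ) T,
      a i j x t ≤ 0)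
    (α : ℝ) (hα0 : 0 < α)
    (hα : ∀ i, ∀ x ∈ Set.Icc (0:ℝ) 1, ∀ t ∈ Set.Icc (0:ℝ) T, α < ∑ j, a i j x t)
    (ψ ψt : Fin (n + 1) → ℝ → ℝ → ℝ) (ψx ψxx : ℝ → ℝ → ℝ)
    -- regularity: every ψ i continuous on Ω̄ with ∂ₜψ i continuous on Ω :
    (hψ_cont : ∀ i, ContinuousOn (fun p : ℝ × ℝ => ψ i p.1 p.2)
      (Set.Icc 0 1 ×ˢ Set.Icc 0 T))
    (hψt : ∀ i, ∀ x ∈ Set.Ioo (0:ℝ) 1, ∀ t ∈ Set.Ioc (0:ℝ) T,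
      HasDerivWithinAt (fun s => ψ i x s) (ψt i x t) (Set.Icc 0 T) t)
    (hψt_cont : ∀ i, ContinuousOn (fun p : ℝ × ℝ => ψt i p.1 p.2)
      (Set.Ioo 0 1 ×ˢ Set.Ioc 0 T))
    -- the last component additionally has ∂ₓψₙ continuous on Ω̄ and ∂ₓ²ψₙ on Ω :
    (hψx : ∀ t ∈ Set.Icc (0:ℝ) T, ∀ x ∈ Set.Icc (0:ℝ) 1,
      HasDerivWithinAt (fun y => ψ (Fin.last n) y t) (ψx x t) (Set.Icc 0 1) x)
    (hψx_cont : ContinuousOn (fun p : ℝ × ℝ => ψx p.1 p.2)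
      (Set.Icc 0 1 ×ˢ Set.Icc 0 T))
    (hψxx : ∀ t ∈ Set.Ioc (0:ℝ) T, ∀ x ∈ Set.Ioo (0:ℝ) 1,
      HasDerivWithinAt (fun y => ψx y t) (ψxx x t) (Set.Ioo 0 1) x)
    (hψxx_cont : ContinuousOn (fun p : ℝ × ℝ => ψxx p.1 p.2)
      (Set.Ioo 0 1 ×ˢ Set.Ioc 0 T))
    -- boundary, initial and interior sign conditions :
    (hb0 : ∀ t ∈ Set.Icc (0:ℝ) T,
      0 ≤ ψ (Fin.last n) 0 t - Real.sqrt εn * ψx 0 t)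
    (hb1 : ∀ t ∈ Set.Icc (0:ℝ) T,
      0 ≤ ψ (Fin.last n) 1 t + Real.sqrt εn * ψx 1 t)
    (hinit : ∀ i, ∀ x ∈ Set.Icc (0:ℝ) 1, 0 ≤ ψ i x 0)
    (hL1 : ∀ i, i ≠ Fin.last n → ∀ x ∈ Set.Ioo (0:ℝ) 1, ∀ t ∈ Set.Ioc (0:ℝ) T,
      0 ≤ ψt i x t + ∑ j, a i j x t * ψ j x t)
    (hLn : ∀ x ∈ Set.Ioo (0:ℝ) 1, ∀ t ∈ Set.Ioc (0:ℝ) T,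
      0 ≤ ψt (Fin.last n) x t - εn * ψxx x t +
        ∑ j, a (Fin.last n) j x t * ψ j x t) :
    ∀ i, ∀ x ∈ Set.Icc (0:ℝ) 1, ∀ t ∈ Set.Icc (0:ℝ) T, 0 ≤ ψ i x t := by
  have hK : IsCompact (Set.Icc (0:ℝ) 1 ×ˢ Set.Icc (0:ℝ) T) :=
    isCompact_Icc.prod isCompact_Icc
  have hKne : (Set.Icc (0:ℝ) 1 ×ˢ Set.Icc (0:ℝ) T).Nonempty :=
    ⟨(0, 0), ⟨⟨le_refl _, zero_le_one⟩, ⟨le_refl _, hT.le⟩⟩⟩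
  have hminex : ∀ i, ∃ p ∈ Set.Icc (0:ℝ) 1 ×ˢ Set.Icc (0:ℝ) T,
      IsMinOn (fun q : ℝ × ℝ => ψ i q.1 q.2) (Set.Icc (0:ℝ) 1 ×ˢ Set.Icc (0:ℝ) T) p :=
    fun i => hK.exists_isMinOn hKne (hψ_cont i)
  choose p hpK hpmin using hminex
  obtain ⟨i0, -, hi0min⟩ := Finset.exists_min_image Finset.univ
    (fun i => ψ i (p i).1 (p i).2) ⟨0, Finset.mem_univ _⟩
  set x0 : ℝ := (p i0).1 with hx0def
  set t0 : ℝ := (p i0).2 with ht0def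
  have hx0K : x0 ∈ Set.Icc (0:ℝ) 1 := (hpK i0).1
  have ht0K : t0 ∈ Set.Icc (0:ℝ) T := (hpK i0).2
  set m : ℝ := ψ i0 x0 t0 with hm_def
  have hglobal : ∀ j, ∀ x ∈ Set.Icc (0:ℝ) 1, ∀ t ∈ Set.Icc (0:ℝ) T, m ≤ ψ j x t := by
    intro j x hx t ht
    exact le_trans (hi0min j (Finset.mem_univ _))
      (isMinOn_iff.mp (hpmin j) (x, t) ⟨hx, ht⟩)
  suffices hm0 : 0 ≤ m by
    intro i x hx t ht
    exact le_trans hm0 (hglobal i x hx t ht)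
  by_contra hmneg
  push_neg at hmneg
  -- slice continuity helpers
  have hslice_t : ∀ i, ∀ x ∈ Set.Icc (0:ℝ) 1,
      ContinuousOn (fun s : ℝ => ψ i x s) (Set.Icc 0 T) := by
    intro i x hx
    have hmap : Set.MapsTo (fun s : ℝ => ((x : ℝ), s)) (Set.Icc 0 T)
        (Set.Icc (0:ℝ) 1 ×ˢ Set.Icc (0:ℝ) T) := fun s hs => ⟨hx, hs⟩
    have := ContinuousOn.comp (hψ_cont i)
      ((continuous_const.prodMk continuous_id).continuousOn) hmap
    exact this
  have hslice_x : ∀ i, ∀ t ∈ Set.Icc (0:ℝ) T,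
      ContinuousOn (fun y : ℝ => ψ i y t) (Set.Icc 0 1) := by
    intro i t ht
    have hmap : Set.MapsTo (fun y : ℝ => (y, (t : ℝ))) (Set.Icc 0 1)
        (Set.Icc (0:ℝ) 1 ×ˢ Set.Icc (0:ℝ) T) := fun y hy => ⟨hy, ht⟩
    have := ContinuousOn.comp (hψ_cont i)
      ((continuous_id.prodMk continuous_const).continuousOn) hmap
    exact this
  -- Step 1 : the minimising component must be the last one
  have hi0last : i0 = Fin.last n := by
    by_contra hne
    obtain ⟨q, hqK, hqmax⟩ := hK.exists_isMaxOn hKne (ha_cont i0 i0)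
    set A : ℝ := a i0 i0 q.1 q.2 with hA_def
    have hA_ge : ∀ x ∈ Set.Icc (0:ℝ) 1, ∀ t ∈ Set.Icc (0:ℝ) T, a i0 i0 x t ≤ A :=
      fun x hx t ht => isMaxOn_iff.mp hqmax (x, t) ⟨hx, ht⟩
    have hA0 : 0 < A := by
      have h1 := ha_diag i0 0 ⟨le_refl _, zero_le_one⟩ 0 ⟨le_refl _, hT.le⟩
      have h2 : (0:ℝ) ≤ ∑ j ∈ Finset.univ.erase i0, |a i0 j 0 0| :=
        Finset.sum_nonneg fun j _ => abs_nonneg _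
      have h3 := hA_ge 0 ⟨le_refl _, zero_le_one⟩ 0 ⟨le_refl _, hT.le⟩
      linarith
    -- Grönwall-type lower bound on interior vertical lines
    have key : ∀ x ∈ Set.Ioo (0:ℝ) 1, ∀ t ∈ Set.Icc (0:ℝ) T,
        (-m) * Real.exp (-(A * T)) ≤ ψ i0 x t - m := by
      intro x hx
      have hxIcc : x ∈ Set.Icc (0:ℝ) 1 := ⟨hx.1.le, hx.2.le⟩
      have hc1 : ContinuousOn (fun s => ψ i0 x s - m) (Set.Icc 0 T) :=
        (hslice_t i0 x hxIcc).sub continuousOn_const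
      have hderiv : ∀ t ∈ Set.Ioo (0:ℝ) T,
          HasDerivAt (fun s => ψ i0 x s - m) (ψt i0 x t) t := by
        intro t ht
        have h := (hψt i0 x hx t ⟨ht.1, ht.2.le⟩).hasDerivAt (Icc_mem_nhds ht.1 ht.2)
        simpa using h.sub_const m
      have hineq2 : ∀ t ∈ Set.Ioo (0:ℝ) T,
          0 ≤ ψt i0 x t + A * (ψ i0 x t - m) := by
        intro t ht
        have htIcc : t ∈ Set.Icc (0:ℝ) T := ⟨ht.1.le, ht.2.le⟩
        have hL := hL1 i0 hne x hx t ⟨ht.1, ht.2.le⟩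
        have hsum : ∑ j, a i0 j x t * ψ j x t ≤ A * (ψ i0 x t - m) := by
          have hsplit : a i0 i0 x t * ψ i0 x t
              + ∑ j ∈ Finset.univ.erase i0, a i0 j x t * ψ j x t
              = ∑ j, a i0 j x t * ψ j x t :=
            Finset.add_sum_erase _ (fun j => a i0 j x t * ψ j x t) (Finset.mem_univ i0)
          have herase : ∑ j ∈ Finset.univ.erase i0, a i0 j x t * ψ j x t
              ≤ ∑ j ∈ Finset.univ.erase i0, a i0 j x t * m := by
            apply Finset.sum_le_sum
            intro j hj
            have hj' : i0 ≠ j := fun h => (Finset.mem_erase.mp hj).1 h.symm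
            exact mul_le_mul_of_nonpos_left (hglobal j x hxIcc t htIcc)
              (ha_off i0 j hj' x hxIcc t htIcc)
          have heq : ∑ j ∈ Finset.univ.erase i0, a i0 j x t * m
              = (∑ j, a i0 j x t) * m - a i0 i0 x t * m := by
            rw [← Finset.sum_mul, Finset.sum_erase_eq_sub (Finset.mem_univ i0), sub_mul]
          have hαs := hα i0 x hxIcc t htIcc
          have haii := hA_ge x hxIcc t htIcc
          have hψm := hglobal i0 x hxIcc t htIcc
          nlinarith [mul_nonneg (sub_nonneg.2 haii) (sub_nonneg.2 hψm),
            mul_pos (sub_pos.2 hαs) (neg_pos.2 hmneg),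
            mul_pos hα0 (neg_pos.2 hmneg)]
        linarith
      have hu0' : -m ≤ ψ i0 x 0 - m := by linarith [hinit i0 x hxIcc]
      exact aux_exp_bound T A (-m) hT hA0.le (by linarith) _ _ hc1 hderiv hineq2 hu0'
    -- extend to x0 by continuity, contradiction
    have hcw : Tendsto (fun y => ψ i0 y t0) (𝓝[Set.Ioo (0:ℝ) 1] x0) (𝓝 (ψ i0 x0 t0)) :=
      ((hslice_x i0 t0 ht0K) x0 hx0K).mono_left (nhdsWithin_mono _ Set.Ioo_subset_Icc_self)
    have hne' : (𝓝[Set.Ioo (0:ℝ) 1] x0).NeBot := by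
      refine mem_closure_iff_nhdsWithin_neBot.mp ?_
      rw [closure_Ioo (zero_ne_one)]
      exact hx0K
    have hfinal : m + (-m) * Real.exp (-(A * T)) ≤ ψ i0 x0 t0 := by
      refine ge_of_tendsto hcw ?_
      filter_upwards [eventually_mem_nhdsWithin] with y hy
      linarith [key y hy t0 ht0K]
    have hexp : 0 < (-m) * Real.exp (-(A * T)) :=
      mul_pos (by linarith) (Real.exp_pos _)
    rw [← hm_def] at hfinal
    linarith
  -- Step 2 : analysis at the minimiser of the last component
  have hmlast : ψ (Fin.last n) x0 t0 = m := by rw [hm_def, hi0last]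
  have ht0pos : 0 < t0 := by
    rcases ht0K.1.lt_or_eq with h | h
    · exact h
    · exfalso
      have h0 : (0:ℝ) ≤ m := by rw [hm_def, ← h]; exact hinit i0 x0 hx0K
      linarith
  have ht0Ioc : t0 ∈ Set.Ioc (0:ℝ) T := ⟨ht0pos, ht0K.2⟩
  have hminx : ∀ y ∈ Set.Icc (0:ℝ) 1, ψ (Fin.last n) x0 t0 ≤ ψ (Fin.last n) y t0 := by
    intro y hy; rw [hmlast]; exact hglobal _ y hy t0 ht0K
  have hmint : ∀ s ∈ Set.Icc (0:ℝ) T, ψ (Fin.last n) x0 t0 ≤ ψ (Fin.last n) x0 s := by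
    intro s hs; rw [hmlast]; exact hglobal _ x0 hx0K s hs
  rcases hx0K.1.lt_or_eq with hx0pos | hx0eq0
  · rcases hx0K.2.lt_or_eq with hx0lt1 | hx0eq1
    · -- interior minimiser
      have hx0Ioo : x0 ∈ Set.Ioo (0:ℝ) 1 := ⟨hx0pos, hx0lt1⟩
      have hψt_le : ψt (Fin.last n) x0 t0 ≤ 0 :=
        aux_deriv_nonpos (fun s => ψ (Fin.last n) x0 s) _ 0 T t0 ht0pos ht0K.2
          (hψt (Fin.last n) x0 hx0Ioo t0 ht0Ioc) hmint
      have hψxx_ge : 0 ≤ ψxx x0 t0 :=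
        aux_second_deriv (fun y => ψ (Fin.last n) y t0) (fun y => ψx y t0)
          (ψxx x0 t0) x0 hx0Ioo (hslice_x (Fin.last n) t0 ht0K)
          (fun y hy => hψx t0 ht0K y hy) (hψxx t0 ht0Ioc x0 hx0Ioo) hminx
      have hsum : ∑ j, a (Fin.last n) j x0 t0 * ψ j x0 t0 < 0 := by
        have hsplit : a (Fin.last n) (Fin.last n) x0 t0 * ψ (Fin.last n) x0 t0
            + ∑ j ∈ Finset.univ.erase (Fin.last n), a (Fin.last n) j x0 t0 * ψ j x0 t0
            = ∑ j, a (Fin.last n) j x0 t0 * ψ j x0 t0 :=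
          Finset.add_sum_erase _ (fun j => a (Fin.last n) j x0 t0 * ψ j x0 t0) (Finset.mem_univ (Fin.last n))
        have herase : ∑ j ∈ Finset.univ.erase (Fin.last n),
              a (Fin.last n) j x0 t0 * ψ j x0 t0
            ≤ ∑ j ∈ Finset.univ.erase (Fin.last n), a (Fin.last n) j x0 t0 * m := by
          apply Finset.sum_le_sum
          intro j hj
          have hj' : Fin.last n ≠ j := fun h => (Finset.mem_erase.mp hj).1 h.symm
          exact mul_le_mul_of_nonpos_left (hglobal j x0 hx0K t0 ht0K)
            (ha_off (Fin.last n) j hj' x0 hx0K t0 ht0K)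
        have heq : ∑ j ∈ Finset.univ.erase (Fin.last n), a (Fin.last n) j x0 t0 * m
            = (∑ j, a (Fin.last n) j x0 t0) * m
              - a (Fin.last n) (Fin.last n) x0 t0 * m := by
          rw [← Finset.sum_mul, Finset.sum_erase_eq_sub (Finset.mem_univ (Fin.last n)), sub_mul]
        have hαs := hα (Fin.last n) x0 hx0K t0 ht0K
        rw [hmlast] at hsplit
        nlinarith [mul_pos (sub_pos.2 hαs) (neg_pos.2 hmneg),
          mul_pos hα0 (neg_pos.2 hmneg)]
      have hL := hLn x0 hx0Ioo t0 ht0Ioc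
      nlinarith [mul_nonneg hεn0.le hψxx_ge]
    · -- x0 = 1
      have hge : ψx x0 t0 ≤ 0 :=
        aux_deriv_nonpos (fun y => ψ (Fin.last n) y t0) _ 0 1 x0 hx0pos hx0K.2
          (hψx t0 ht0K x0 hx0K) hminx
      have hb := hb1 t0 ht0K
      rw [hx0eq1] at hmlast hge
      nlinarith [Real.sqrt_nonneg εn, mul_nonpos_of_nonneg_of_nonpos (Real.sqrt_nonneg εn) hge]
  · -- x0 = 0
    have hge : 0 ≤ ψx x0 t0 :=
      aux_deriv_nonneg (fun y => ψ (Fin.last n) y t0) _ 0 1 x0 hx0K.1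
        (by rw [← hx0eq0]; norm_num) (hψx t0 ht0K x0 hx0K) hminx
    have hb := hb0 t0 ht0K
    rw [← hx0eq0] at hmlast hge
    nlinarith [mul_nonneg (Real.sqrt_nonneg εn) hge]
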